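/- Let V be a nonzero finite-dimensional complex vector space and let Λ_1, …, Λ_k ∈ End(V) pairwise commuting with Λ_2, …, Λ_k semisimple. Vectors v_1, …, v_k ∈ V satisfy the block linear system Σ_{j} Λ_{k-(j-i)} v'_j = 0 for each row i (where (v'_1,…,v'_k) = (v_k, v_{k-1},…,v_1) and the block matrix is upper-triangular Toeplitz with Λ_k on the diagonal, Λ_{k-1} above, etc.) if and only if v_i ∈ Ker Λ_i ∩ Ker Λ_{i+1} ∩ ⋯ ∩ Ker Λ_k for each i = 1, …, k. In particular, the kernel of the block Toeplitz matrix Λ_hat has dimension Σ_{i=1}^k dim(Ker Λ_i ∩ ⋯ ∩ Ker Λ_k). -/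

import Mathlib

open Module

/-- The block upper-triangular Toeplitz matrix `Λ̂` on `V^{⊕(k+1)}` with `(i,j)`-block
`Λ_{k-(j-i)}` (0-indexed) for `i ≤ j`, zero below the diagonal. -/
noncomputable def Lhat (V : Type*) [AddCommGroup V] [Module ℂ V] (k : ℕ)
    (Λ : Fin (k + 1) → Module.End ℂ V) :
    (Fin (k + 1) → V) →ₗ[ℂ] (Fin (k + 1) → V) :=
  LinearMap.pi fun i => ∑ j : Fin (k + 1),
    if i ≤ j then
      (Λ ⟨k - ((j : ℕ) - (i : ℕ)), by omega⟩) ∘ₗ LinearMap.proj j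
    else 0

lemma ss_sq_zero {V : Type*} [AddCommGroup V] [Module ℂ V] [FiniteDimensional ℂ V]
    (f : Module.End ℂ V) (hf : f.IsSemisimple) (x : V) (h : f (f x) = 0) : f x = 0 := by
  have h2 : x ∈ f.genEigenspace 0 (2 : ℕ) := by
    rw [Module.End.mem_genEigenspace_nat]
    simpa [pow_two] using h
  rw [hf.isFinitelySemisimple.genEigenspace_eq_eigenspace 0 (by norm_num)] at h2
  simpa using Module.End.mem_eigenspace_iff.mp h2

lemma comm_apply {V : Type*} [AddCommGroup V] [Module ℂ V]
    {f g : Module.End ℂ V} (h : Commute f g) (x : V) : f (g x) = g (f x) := by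
  have := h.eq
  calc f (g x) = (f * g) x := (Module.End.mul_apply f g x).symm
    _ = (g * f) x := by rw [this]
    _ = g (f x) := Module.End.mul_apply g f x

lemma key_forward {V : Type*} [AddCommGroup V] [Module ℂ V] [FiniteDimensional ℂ V]
    (k : ℕ) (Λ : Fin (k + 1) → Module.End ℂ V)
    (hc : ∀ i j, Commute (Λ i) (Λ j))
    (hs : ∀ i : Fin (k + 1), 1 ≤ (i : ℕ) → (Λ i).IsSemisimple)
    (w : Fin (k + 1) → V)
    (hw : ∀ i : Fin (k + 1), ∑ j : Fin (k + 1),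
      (if i ≤ j then (Λ ⟨k - ((j : ℕ) - (i : ℕ)), by omega⟩) (w j) else 0) = 0) :
    ∀ l j : Fin (k + 1), k ≤ (l : ℕ) + (j : ℕ) → Λ l (w j) = 0 := by
  suffices H : ∀ n : ℕ, ∀ l j : Fin (k + 1), k ≤ (l : ℕ) + (j : ℕ) →
      (2 * k - ((l : ℕ) + (j : ℕ))) * (k + 1) + (j : ℕ) < n → Λ l (w j) = 0 by
    intro l j h
    exact H ((2 * k - ((l : ℕ) + (j : ℕ))) * (k + 1) + (j : ℕ) + 1) l j h (Nat.lt_succ_self _)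
  intro n
  induction n using Nat.strong_induction_on with
  | _ n ih =>
    intro l j hk hm
    have hl : (l : ℕ) ≤ k := by omega
    have hj : (j : ℕ) ≤ k := by omega
    have IH : ∀ l' j' : Fin (k + 1), k ≤ (l' : ℕ) + (j' : ℕ) →
        ((2 * k - ((l' : ℕ) + (j' : ℕ))) * (k + 1) + (j' : ℕ)
          < (2 * k - ((l : ℕ) + (j : ℕ))) * (k + 1) + (j : ℕ)) → Λ l' (w j') = 0 :=
      fun l' j' h1 h2 => ih _ hm l' j' h1 h2
    obtain ⟨i, hi⟩ : ∃ i : Fin (k + 1), (i : ℕ) = (l : ℕ) + (j : ℕ) - k :=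
      ⟨⟨_, by omega⟩, rfl⟩
    obtain ⟨D, hD⟩ : ∃ D : Fin (k + 1) → Fin (k + 1),
        ∀ j' : Fin (k + 1), (D j' : ℕ) = k - ((j' : ℕ) - ((l : ℕ) + (j : ℕ) - k)) :=
      ⟨fun j' => ⟨_, by omega⟩, fun j' => rfl⟩
    have hDj : D j = l := Fin.ext (by rw [hD]; omega)
    have hT : ∑ j' : Fin (k + 1), (if j ≤ j' then (Λ (D j')) (w j') else 0) = 0 := by
      have hcongr : ∑ j' : Fin (k + 1), (if j ≤ j' then (Λ (D j')) (w j') else 0)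
          = ∑ j' : Fin (k + 1),
            (if i ≤ j' then (Λ ⟨k - ((j' : ℕ) - (i : ℕ)), by omega⟩) (w j') else 0) := by
        refine Finset.sum_congr rfl (fun j' _ => ?_)
        by_cases hij' : i ≤ j'
        · have hij'' : (l : ℕ) + (j : ℕ) - k ≤ (j' : ℕ) := by
            have := Fin.le_def.mp hij'; omega
          by_cases hjj' : j ≤ j'
          · rw [if_pos hjj', if_pos hij']
            congr 2
            refine Fin.ext ?_
            show (D j' : ℕ) = k - ((j' : ℕ) - (i : ℕ))
            rw [hD, hi]
          · have hjj'' : (j' : ℕ) < (j : ℕ) := by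
              have := Fin.lt_def.mp (not_le.mp hjj'); omega
            rw [if_neg hjj', if_pos hij']
            have hDj' : (D j' : ℕ) = (l : ℕ) + (j : ℕ) - (j' : ℕ) := by rw [hD]; omega
            have hz : Λ (D j') (w j') = 0 := by
              refine IH (D j') j' (by omega) ?_
              rw [hDj']
              have h1 : (l:ℕ)+(j:ℕ)-(j':ℕ) + (j':ℕ) = (l:ℕ)+(j:ℕ) := by omega
              rw [h1]
              omega
            refine Eq.symm ?_
            have he : (⟨k - ((j' : ℕ) - (i : ℕ)), by omega⟩ : Fin (k+1)) = D j' :=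
              Fin.ext (by show k - ((j' : ℕ) - (i : ℕ)) = _; rw [hD, hi])
            rw [he, hz]
        · have hij'' : (j' : ℕ) < (l : ℕ) + (j : ℕ) - k := by
            have := Fin.lt_def.mp (not_le.mp hij'); omega
          have hjj' : ¬ j ≤ j' := by
            intro h; have := Fin.le_def.mp h; omega
          rw [if_neg hij', if_neg hjj']
      rw [hcongr, hw i]
    by_cases hl0 : (l : ℕ) = 0
    · rw [Finset.sum_eq_single j] at hT
      · rwa [if_pos le_rfl, hDj] at hT
      · intro b _ hb
        rw [if_neg]
        intro hle
        have h1 := Fin.le_def.mp hle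
        have h2 : (b : ℕ) ≤ k := by omega
        have h3 : (j : ℕ) = k := by omega
        exact hb (Fin.ext (by omega))
      · intro h; exact absurd (Finset.mem_univ j) h
    · have h1l : 1 ≤ (l : ℕ) := by omega
      have happ : ∑ j' : Fin (k + 1),
          Λ l (if j ≤ j' then (Λ (D j')) (w j') else 0) = 0 := by
        rw [← map_sum, hT, map_zero]
      rw [Finset.sum_eq_single j] at happ
      · rw [if_pos le_rfl, hDj] at happ
        exact ss_sq_zero (Λ l) (hs l h1l) (w j) happ
      · intro b _ hb
        by_cases hjb : j ≤ b
        · rw [if_pos hjb]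
          have hjb' : (j : ℕ) < (b : ℕ) := by
            have h1 := Fin.le_def.mp hjb
            rcases Nat.lt_or_ge (j : ℕ) (b : ℕ) with h | h
            · exact h
            · exact absurd (Fin.ext (by omega) : b = j) hb
          have hwb : Λ l (w b) = 0 := by
            refine IH l b (by omega) ?_
            have h2 : (b : ℕ) ≤ k := by omega
            have h1 : 2 * k - ((l:ℕ) + (b:ℕ)) < 2 * k - ((l:ℕ) + (j:ℕ)) := by omega
            calc (2 * k - ((l:ℕ) + (b:ℕ))) * (k + 1) + (b : ℕ)
                < (2 * k - ((l:ℕ) + (b:ℕ))) * (k + 1) + (k + 1) := by omega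
              _ = (2 * k - ((l:ℕ) + (b:ℕ)) + 1) * (k + 1) := by ring
              _ ≤ (2 * k - ((l:ℕ) + (j:ℕ))) * (k + 1) := Nat.mul_le_mul_right _ (by omega)
              _ ≤ (2 * k - ((l:ℕ) + (j:ℕ))) * (k + 1) + (j : ℕ) := by omega
          rw [comm_apply (hc l _), hwb, map_zero]
        · rw [if_neg hjb, map_zero]
      · intro h; exact absurd (Finset.mem_univ j) h


lemma Lhat_apply (V : Type*) [AddCommGroup V] [Module ℂ V] (k : ℕ)
    (Λ : Fin (k + 1) → Module.End ℂ V) (w : Fin (k + 1) → V) (i : Fin (k + 1)) :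
    Lhat V k Λ w i = ∑ j : Fin (k + 1),
      (if i ≤ j then (Λ ⟨k - ((j : ℕ) - (i : ℕ)), by omega⟩) (w j) else 0) := by
  simp only [Lhat, LinearMap.pi_apply, LinearMap.sum_apply]
  refine Finset.sum_congr rfl (fun j _ => ?_)
  by_cases h : i ≤ j
  · rw [if_pos h, if_pos h]; rfl
  · rw [if_neg h, if_neg h]; rfl

/-- pi submodule equiv -/
def pie {ι : Type*} [Fintype ι] {V : Type*} [AddCommGroup V] [Module ℂ V]
    (p : ι → Submodule ℂ V) :
    (Submodule.pi Set.univ p) ≃ₗ[ℂ] (Π i, p i) where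
  toFun x := fun i => ⟨x.1 i, x.2 i trivial⟩
  map_add' x y := rfl
  map_smul' c x := rfl
  invFun v := ⟨fun i => (v i).1, fun i _ => (v i).2⟩
  left_inv x := rfl
  right_inv v := rfl

/-- for a normal form (`Λ_i` pairwise commuting, `Λ_2, …` semisimple),
`w` lies in the kernel of the block Toeplitz matrix `Λ̂` iff each component `w_j` lies
in `Ker Λ_l` for all `l ≥ rev j` (equivalently, the 1-indexed condition
`v_i ∈ Ker Λ_i ∩ ⋯ ∩ Ker Λ_k` for the reversed vector). In particular
`dim Ker Λ̂ = Σ_i dim (Ker Λ_i ∩ ⋯ ∩ Ker Λ_k)`. -/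
theorem stmt16
    (V : Type*) [AddCommGroup V] [Module ℂ V] [FiniteDimensional ℂ V] [Nontrivial V]
    (k : ℕ) (Λ : Fin (k + 1) → Module.End ℂ V)
    (hc : ∀ i j, Commute (Λ i) (Λ j))
    (hs : ∀ i : Fin (k + 1), 1 ≤ (i : ℕ) → (Λ i).IsSemisimple) :
    (∀ w : Fin (k + 1) → V, w ∈ LinearMap.ker (Lhat V k Λ) ↔
      ∀ j l : Fin (k + 1), j.rev ≤ l → Λ l (w j) = 0) ∧
    finrank ℂ ↥(LinearMap.ker (Lhat V k Λ)) =
      ∑ i : Fin (k + 1), finrank ℂ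
        ↥(⨅ l : {l : Fin (k + 1) // i ≤ l}, LinearMap.ker (Λ (l : Fin (k + 1)))) := by
  have hrev : ∀ j : Fin (k + 1), (j.rev : ℕ) = k - (j : ℕ) := by
    intro j; simp [Fin.val_rev]
  have hmain : ∀ w : Fin (k + 1) → V, w ∈ LinearMap.ker (Lhat V k Λ) ↔
      ∀ j l : Fin (k + 1), j.rev ≤ l → Λ l (w j) = 0 := by
    intro w
    rw [LinearMap.mem_ker]
    constructor
    · intro hw j l hjl
      have hw' : ∀ i : Fin (k + 1), ∑ j : Fin (k + 1),
          (if i ≤ j then (Λ ⟨k - ((j : ℕ) - (i : ℕ)), by omega⟩) (w j) else 0) = 0 := by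
        intro i
        rw [← Lhat_apply, hw]
        rfl
      refine key_forward k Λ hc hs w hw' l j ?_
      have := Fin.le_def.mp hjl
      rw [hrev] at this
      omega
    · intro h
      funext i
      rw [Lhat_apply]
      refine Finset.sum_eq_zero (fun j _ => ?_)
      by_cases hij : i ≤ j
      · rw [if_pos hij]
        refine h j ⟨k - ((j : ℕ) - (i : ℕ)), by omega⟩ ?_
        rw [Fin.le_def, hrev]
        show k - (j : ℕ) ≤ k - ((j : ℕ) - (i : ℕ))
        omega
      · rw [if_neg hij]
  refine ⟨hmain, ?_⟩
  set K : Fin (k + 1) → Submodule ℂ V :=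
    fun i => ⨅ l : {l : Fin (k + 1) // i ≤ l}, LinearMap.ker (Λ (l : Fin (k + 1))) with hK
  have hker : LinearMap.ker (Lhat V k Λ) = Submodule.pi Set.univ (fun j => K j.rev) := by
    ext w
    rw [hmain w, Submodule.mem_pi]
    constructor
    · intro h j _
      rw [hK, Submodule.mem_iInf]
      rintro ⟨l, hl⟩
      exact LinearMap.mem_ker.mpr (h j l hl)
    · intro h j l hjl
      have := h j trivial
      rw [hK, Submodule.mem_iInf] at this
      exact LinearMap.mem_ker.mp (this ⟨l, hjl⟩)
  rw [hker]
  have e1 := LinearEquiv.finrank_eq (pie (fun j : Fin (k + 1) => K j.rev))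
  rw [e1, Module.finrank_pi_fintype]
  exact Fintype.sum_equiv Fin.revPerm _ _ (fun j => rfl)
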